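/- Let θ : ℝ → ℝ be continuously differentiable with |θ'(x₁)| ≥ |x₁| for all x₁ ∈ ℝ, let ε > 0, σ ≥ 0, and Λ > 0. Then ∫_ℝ (ε θ'(x₁)² − Λ)₋^{σ+3/2} dx₁ ≤ 2 ε^{−1/2} Λ^{σ+2}. (The integral estimate behind the improved Berezin comparison (berezin comparison) in Section 4.3.) -/

import Mathlib

open Real Set Filter MeasureTheory

/-- The integral estimate behind (berezin comparison) in Section 4.3: if `θ` is continuously
differentiable with `|θ'(x₁)| ≥ |x₁|` for all `x₁`, then for `ε > 0`, `σ ≥ 0` and `Λ > 0`,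
`∫_ℝ (ε θ'(x₁)² − Λ)₋^{σ+3/2} dx₁ ≤ 2 ε^{−1/2} Λ^{σ+2}`. -/
theorem integral_le_berezin (θ : ℝ → ℝ) (hθ : ContDiff ℝ 1 θ)
    (hgrow : ∀ x : ℝ, |x| ≤ |deriv θ x|)
    (ε σ Λ : ℝ) (hε : 0 < ε) (hσ : 0 ≤ σ) (hΛ : 0 < Λ) :
    ∫ x : ℝ, (max (-(ε * (deriv θ x) ^ 2 - Λ)) 0) ^ (σ + 3 / 2 : ℝ) ≤
      2 * ε ^ (-(1 / 2) : ℝ) * Λ ^ (σ + 2 : ℝ) := by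
  set R : ℝ := Real.sqrt (Λ / ε) with hR
  have hRpos : 0 < R := Real.sqrt_pos.2 (div_pos hΛ hε)
  have hepos : (0:ℝ) < σ + 3 / 2 := by linarith
  set f : ℝ → ℝ := fun x => (max (-(ε * (deriv θ x) ^ 2 - Λ)) 0) ^ (σ + 3 / 2 : ℝ) with hf
  -- f vanishes outside [-R, R]
  have hzero : ∀ x : ℝ, x ∉ Icc (-R) R → f x = 0 := by
    intro x hx
    have hxR : R < |x| := by
      simp only [mem_Icc, not_and_or, not_le] at hx
      rcases hx with h | h
      · rw [abs_of_neg (by linarith)]; linarith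
      · rw [abs_of_pos (by linarith)]; linarith
    have h1 : Λ ≤ ε * x ^ 2 := by
      have h2 : R ^ 2 < x ^ 2 := by
        have := sq_lt_sq' (by linarith [abs_nonneg x, hxR] : -|x| < R) hxR
        calc R ^ 2 < |x| ^ 2 := this
        _ = x ^ 2 := sq_abs x
      have hR2 : R ^ 2 = Λ / ε := Real.sq_sqrt (le_of_lt (div_pos hΛ hε))
      rw [hR2] at h2
      rw [div_lt_iff₀ hε] at h2
      nlinarith
    have h3 : ε * x ^ 2 ≤ ε * (deriv θ x) ^ 2 := by
      have := hgrow x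
      have hax := hgrow x
      have : x ^ 2 ≤ (deriv θ x) ^ 2 := by
        nlinarith [abs_nonneg x, sq_abs x, sq_abs (deriv θ x)]
      nlinarith
    have hmax : max (-(ε * (deriv θ x) ^ 2 - Λ)) 0 = 0 :=
      max_eq_right (by linarith)
    simp only [hf, hmax]
    exact Real.zero_rpow (ne_of_gt hepos)
  have hfnn : ∀ x, 0 ≤ f x := fun x => Real.rpow_nonneg (le_max_right _ _) _
  -- continuity
  have hderiv : Continuous (deriv θ) := hθ.continuous_deriv le_rfl
  have hfc : Continuous f := by
    apply Continuous.rpow_const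
    · exact (continuous_const.mul (hderiv.pow 2) |>.sub continuous_const).neg.max continuous_const
    · intro x; exact Or.inr (le_of_lt hepos)
  have hsupp : HasCompactSupport f := by
    apply HasCompactSupport.intro isCompact_Icc hzero
  have hfint : Integrable f := hfc.integrable_of_hasCompactSupport hsupp
  -- pointwise bound
  have hbound : ∀ x, f x ≤ Set.indicator (Icc (-R) R) (fun _ => Λ ^ (σ + 3/2 : ℝ)) x := by
    intro x
    by_cases hx : x ∈ Icc (-R) R
    · rw [Set.indicator_of_mem hx]
      apply Real.rpow_le_rpow (le_max_right _ _) _ (le_of_lt hepos)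
      apply max_le _ hΛ.le
      nlinarith [sq_nonneg (deriv θ x)]
    · rw [Set.indicator_of_notMem hx, hzero x hx]
  have hindint : Integrable (Set.indicator (Icc (-R) R) (fun _ => Λ ^ (σ + 3/2 : ℝ))) := by
    apply (integrable_indicator_iff measurableSet_Icc).2
    exact integrableOn_const measure_Icc_lt_top.ne
  have h1 := integral_mono hfint hindint hbound
  have h2 : ∫ x : ℝ, Set.indicator (Icc (-R) R) (fun _ => Λ ^ (σ + 3/2 : ℝ)) x
      = (2 * R) * Λ ^ (σ + 3/2 : ℝ) := by
    rw [integral_indicator measurableSet_Icc, setIntegral_const, measureReal_def, Real.volume_Icc]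
    rw [ENNReal.toReal_ofReal (by linarith), smul_eq_mul]
    ring
  rw [h2] at h1
  refine h1.trans (le_of_eq ?_)
  have hRe : R = Λ ^ ((1:ℝ)/2) * ε ^ (-(1/2) : ℝ) := by
    rw [hR, Real.sqrt_eq_rpow, Real.div_rpow hΛ.le hε.le, Real.rpow_neg hε.le,
      div_eq_mul_inv]
  have hsplit : Λ ^ (σ + 2 : ℝ) = Λ ^ (σ + 3/2 : ℝ) * Λ ^ ((1:ℝ)/2) := by
    rw [← Real.rpow_add hΛ]; congr 1; ring
  rw [hsplit, hRe]; ring
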